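/- For fixed a, b ≥ 2 with a ≡ b ≡ 0 (mod 3), the ratio N_ℓ(a)·N_ℓ(b)/N_ℓ(a+b) converges to the binomial coefficient C((a+b)/3, a/3) as ℓ → ∞; in particular Δ^ℓ_{a,b} > 0 for all sufficiently large ℓ whenever (a,b) ≠ (3,3) is such that C((a+b)/3, a/3) > 1 (which always holds for a,b ≥ 3). -/

import Mathlib

open Equiv Filter
set_option linter.unusedSectionVars false

/-- Number of subgroups of `ℤ^ℓ` of index `n`. -/
noncomputable def g (ℓ n : ℕ) : ℕ := Nat.card {H : AddSubgroup (Fin ℓ → ℤ) // H.index = n}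

/-- `N ℓ n = |Hom(ℤ^ℓ, S_n)| / n!`, the number of ℓ-tuples of pairwise
commuting permutations of `n` letters, divided by `n!`. -/
noncomputable def N (ℓ n : ℕ) : ℚ :=
  (Nat.card {π : Fin ℓ → Equiv.Perm (Fin n) // ∀ i j, Commute (π i) (π j)} : ℚ) / n.factorial

namespace NAsym

variable {ℓ : ℕ} {α β : Type*}

/-- pairwise commuting tuple -/
def Comm (π : Fin ℓ → Perm α) : Prop := ∀ i j, Commute (π i) (π j)

/-- subgroup generated by the tuple -/
def Cl (π : Fin ℓ → Perm α) : Subgroup (Perm α) := Subgroup.closure (Set.range π)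

/-- the generated subgroup acts transitively -/
def Trans' (π : Fin ℓ → Perm α) : Prop := ∀ x y : α, ∃ g ∈ Cl π, g x = y

lemma mem_Cl (π : Fin ℓ → Perm α) (i : Fin ℓ) : π i ∈ Cl π :=
  Subgroup.subset_closure (Set.mem_range_self i)

/-- closure induction without the inversion case, for finite groups -/
lemma closure_ind {G : Type*} [Group G] [Finite G] {s : Set G} {p : G → Prop}
    (mem : ∀ x ∈ s, p x) (one : p 1) (mul : ∀ x y, p x → p y → p (x * y)) :
    ∀ x ∈ Subgroup.closure s, p x := by
  have hpow : ∀ x, p x → ∀ n, p (x ^ (n + 1)) := by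
    intro x hx n
    induction n with
    | zero => simpa using hx
    | succ k ih => rw [pow_succ]; exact mul _ _ ih hx
  intro x hx
  induction hx using Subgroup.closure_induction with
  | mem x hx => exact mem x hx
  | one => exact one
  | mul x y _ _ hx hy => exact mul x y hx hy
  | inv x _ hx =>
    have h1 : x ^ orderOf x = 1 := pow_orderOf_eq_one x
    have ho : orderOf x ≠ 0 := (orderOf_pos x).ne'
    rcases Nat.exists_eq_succ_of_ne_zero ho with ⟨k, hk⟩
    have hinv : x⁻¹ = x ^ k := by
      apply inv_eq_of_mul_eq_one_right
      rw [Nat.succ_eq_add_one] at hk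
      rw [← pow_succ', ← hk, h1]
    rw [hinv]
    cases k with
    | zero => simpa using one
    | succ m => exact hpow x hx m

lemma comm_Cl {π : Fin ℓ → Perm α} [Finite α] (hc : Comm π) :
    ∀ g ∈ Cl π, ∀ h ∈ Cl π, Commute g h := by
  have step1 : ∀ g ∈ Cl π, ∀ i, Commute (π i) g := by
    refine closure_ind ?_ ?_ ?_
    · rintro x ⟨j, rfl⟩ i; exact hc i j
    · intro i; exact Commute.one_right _
    · intro x y hx hy i; exact (hx i).mul_right (hy i)
  refine closure_ind ?_ ?_ ?_
  · rintro x ⟨j, rfl⟩ h hh; exact step1 h hh j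
  · intro h _; exact Commute.one_left _
  · intro x y hx hy h hh; exact (hx h hh).mul_left (hy h hh)


section Decomp

variable [Fintype α] [DecidableEq α]

open scoped Classical

/-- orbit of x₀ as a Finset -/
noncomputable def Orb (π : Fin ℓ → Perm α) (x₀ : α) : Finset α :=
  Finset.univ.filter (fun y => ∃ g ∈ Cl π, g x₀ = y)

lemma mem_Orb {π : Fin ℓ → Perm α} {x₀ y : α} :
    y ∈ Orb π x₀ ↔ ∃ g ∈ Cl π, g x₀ = y := by simp [Orb]

lemma x0_mem_Orb (π : Fin ℓ → Perm α) (x₀ : α) : x₀ ∈ Orb π x₀ :=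
  mem_Orb.2 ⟨1, one_mem _, rfl⟩

lemma Orb_inv {π : Fin ℓ → Perm α} {x₀ : α} (i : Fin ℓ) (x : α) :
    x ∈ Orb π x₀ ↔ π i x ∈ Orb π x₀ := by
  rw [mem_Orb, mem_Orb]
  constructor
  · rintro ⟨g, hg, rfl⟩
    exact ⟨π i * g, mul_mem (mem_Cl π i) hg, rfl⟩
  · rintro ⟨g, hg, hgx⟩
    refine ⟨(π i)⁻¹ * g, mul_mem (inv_mem (mem_Cl π i)) hg, ?_⟩
    simp [Perm.mul_apply, hgx]

/-- restriction of a tuple to an invariant set -/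
def restr (π : Fin ℓ → Perm α) (S : Finset α) (hinv : ∀ i x, x ∈ S ↔ π i x ∈ S) :
    Fin ℓ → Perm {x // x ∈ S} := fun i => (π i).subtypePerm (fun x => (hinv i x).symm)

/-- restriction of a tuple to the complement of an invariant set -/
def restrC (π : Fin ℓ → Perm α) (S : Finset α) (hinv : ∀ i x, x ∈ S ↔ π i x ∈ S) :
    Fin ℓ → Perm {x // ¬ x ∈ S} := fun i => (π i).subtypePerm (fun x => not_congr (hinv i x).symm)

/-- words in π restrict to words in the restriction -/
lemma restr_agree {π : Fin ℓ → Perm α} {S : Finset α} (hinv : ∀ i x, x ∈ S ↔ π i x ∈ S) :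
    ∀ g ∈ Cl π, ∀ x (hx : x ∈ S),
      ∃ g' ∈ Cl (restr π S hinv), ((g' ⟨x, hx⟩ : {x // x ∈ S}) : α) = g x := by
  refine closure_ind ?_ ?_ ?_
  · rintro x ⟨i, rfl⟩ x' hx'
    exact ⟨restr π S hinv i, mem_Cl _ i, rfl⟩
  · intro x hx; exact ⟨1, one_mem _, rfl⟩
  · rintro g h hg hh x hx
    obtain ⟨h', hh', hh'x⟩ := hh x hx
    have hmem : h x ∈ S := by rw [← hh'x]; exact (h' ⟨x, hx⟩).2
    obtain ⟨g', hg', hg'x⟩ := hg (h x) hmem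
    refine ⟨g' * h', mul_mem hg' hh', ?_⟩
    have : h' ⟨x, hx⟩ = ⟨h x, hmem⟩ := Subtype.ext hh'x
    rw [Perm.mul_apply, Perm.mul_apply, this, hg'x]

/-- combining permutations of S and its complement -/
def comb {S : Finset α} (σ : Fin ℓ → Perm {x // x ∈ S}) (τ : Fin ℓ → Perm {x // ¬ x ∈ S}) :
    Fin ℓ → Perm α := fun i => (σ i).subtypeCongr (τ i)

lemma comb_inv {S : Finset α} (σ : Fin ℓ → Perm {x // x ∈ S}) (τ : Fin ℓ → Perm {x // ¬ x ∈ S}) :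
    ∀ i x, x ∈ S ↔ comb σ τ i x ∈ S := by
  intro i x
  by_cases hx : x ∈ S
  · simp only [hx, true_iff, comb, Perm.subtypeCongr.left_apply _ _ hx]
    exact (σ i ⟨x, hx⟩).2
  · simp only [hx, false_iff, comb, Perm.subtypeCongr.right_apply _ _ hx]
    exact (τ i ⟨x, hx⟩).2

lemma Cl_comb_inv {S : Finset α} (σ : Fin ℓ → Perm {x // x ∈ S}) (τ : Fin ℓ → Perm {x // ¬ x ∈ S}) :
    ∀ g ∈ Cl (comb σ τ), ∀ x, x ∈ S ↔ g x ∈ S := by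
  refine closure_ind ?_ ?_ ?_
  · rintro x ⟨i, rfl⟩ x'; exact comb_inv σ τ i x'
  · intro x; simp
  · intro g h hg hh x
    rw [Perm.mul_apply, hh x, hg (h x)]

/-- words in the restriction extend to words in π -/
lemma comb_agree {S : Finset α} (σ : Fin ℓ → Perm {x // x ∈ S}) (τ : Fin ℓ → Perm {x // ¬ x ∈ S}) :
    ∀ g' ∈ Cl σ, ∃ g ∈ Cl (comb σ τ), ∀ x (hx : x ∈ S),
      g x = ((g' ⟨x, hx⟩ : {x // x ∈ S}) : α) := by
  refine closure_ind ?_ ?_ ?_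
  · rintro x ⟨i, rfl⟩
    exact ⟨comb σ τ i, mem_Cl _ i, fun x hx => Perm.subtypeCongr.left_apply _ _ hx⟩
  · exact ⟨1, one_mem _, fun x hx => rfl⟩
  · rintro g' h' ⟨g, hg, hgag⟩ ⟨h, hh, hhag⟩
    refine ⟨g * h, mul_mem hg hh, ?_⟩
    intro x hx
    rw [Perm.mul_apply, hhag x hx]
    rw [hgag _ (h' ⟨x, hx⟩).2]
    congr 1

lemma comb_apply_mem {S : Finset α} (σ : Fin ℓ → Perm {x // x ∈ S})
    (τ : Fin ℓ → Perm {x // ¬ x ∈ S}) (i : Fin ℓ) {x : α} (hx : x ∈ S) :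
    comb σ τ i x = ↑(σ i ⟨x, hx⟩) := Perm.subtypeCongr.left_apply _ _ hx

lemma comb_apply_not_mem {S : Finset α} (σ : Fin ℓ → Perm {x // x ∈ S})
    (τ : Fin ℓ → Perm {x // ¬ x ∈ S}) (i : Fin ℓ) {x : α} (hx : ¬ x ∈ S) :
    comb σ τ i x = ↑(τ i ⟨x, hx⟩) := Perm.subtypeCongr.right_apply _ _ hx

lemma comb_apply_coe {S : Finset α} (σ : Fin ℓ → Perm {x // x ∈ S})
    (τ : Fin ℓ → Perm {x // ¬ x ∈ S}) (i : Fin ℓ) (y : {x // x ∈ S}) :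
    comb σ τ i ↑y = ↑(σ i y) := comb_apply_mem σ τ i y.2

lemma comb_apply_coe' {S : Finset α} (σ : Fin ℓ → Perm {x // x ∈ S})
    (τ : Fin ℓ → Perm {x // ¬ x ∈ S}) (i : Fin ℓ) (y : {x // ¬ x ∈ S}) :
    comb σ τ i ↑y = ↑(τ i y) := comb_apply_not_mem σ τ i y.2

lemma comm_restr {π : Fin ℓ → Perm α} {S : Finset α} (hinv : ∀ i x, x ∈ S ↔ π i x ∈ S)
    (hc : Comm π) : Comm (restr π S hinv) := by
  intro i j
  ext x
  simp only [Perm.mul_apply, restr, Perm.subtypePerm_apply]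
  have := Perm.ext_iff.1 (hc i j) x.1
  simpa [Perm.mul_apply] using this

lemma comm_restrC {π : Fin ℓ → Perm α} {S : Finset α} (hinv : ∀ i x, x ∈ S ↔ π i x ∈ S)
    (hc : Comm π) : Comm (restrC π S hinv) := by
  intro i j
  ext x
  simp only [Perm.mul_apply, restrC, Perm.subtypePerm_apply]
  have := Perm.ext_iff.1 (hc i j) x.1
  simpa [Perm.mul_apply] using this

lemma comm_comb {S : Finset α} {σ : Fin ℓ → Perm {x // x ∈ S}}
    {τ : Fin ℓ → Perm {x // ¬ x ∈ S}} (hcσ : Comm σ) (hcτ : Comm τ) : Comm (comb σ τ) := by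
  intro i j
  ext x
  rw [Perm.mul_apply, Perm.mul_apply]
  by_cases hx : x ∈ S
  · rw [comb_apply_mem σ τ j hx, comb_apply_mem σ τ i hx, comb_apply_coe, comb_apply_coe]
    have : σ i (σ j ⟨x, hx⟩) = σ j (σ i ⟨x, hx⟩) := by
      have := Perm.ext_iff.1 (hcσ i j) ⟨x, hx⟩
      simpa [Perm.mul_apply] using this
    rw [this]
  · rw [comb_apply_not_mem σ τ j hx, comb_apply_not_mem σ τ i hx, comb_apply_coe',
      comb_apply_coe']
    have : τ i (τ j ⟨x, hx⟩) = τ j (τ i ⟨x, hx⟩) := by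
      have := Perm.ext_iff.1 (hcτ i j) ⟨x, hx⟩
      simpa [Perm.mul_apply] using this
    rw [this]

/-- generic fibering of a subtype over an invariant of its elements -/
def sigmaFiberSubtype {γ I : Type*} (P : γ → Prop) (f : γ → I) (Q : I → Prop)
    (hQ : ∀ x, P x → Q (f x)) :
    {x // P x} ≃ Σ i : {i // Q i}, {x // P x ∧ f x = i.1} where
  toFun x := ⟨⟨f x.1, hQ x.1 x.2⟩, ⟨x.1, x.2, rfl⟩⟩
  invFun p := ⟨p.2.1, p.2.2.1⟩
  left_inv x := rfl
  right_inv p := by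
    rcases p with ⟨⟨i, hi⟩, ⟨x, hx, hfx⟩⟩
    dsimp at hfx
    subst hfx
    rfl

variable (x₀ : α)

lemma hinv_of {π : Fin ℓ → Perm α} {S : Finset α} (ho : Orb π x₀ = S) :
    ∀ i x, x ∈ S ↔ π i x ∈ S := by
  intro i x
  rw [← ho, Orb_inv i x]

lemma trans_restr {π : Fin ℓ → Perm α} {S : Finset α} (hinv : ∀ i x, x ∈ S ↔ π i x ∈ S)
    (ho : Orb π x₀ = S) : Trans' (restr π S hinv) := by
  rintro ⟨x, hx⟩ ⟨y, hy⟩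
  rw [← ho] at hx hy
  obtain ⟨gx, hgx, hgxe⟩ := mem_Orb.1 hx
  obtain ⟨gy, hgy, hgye⟩ := mem_Orb.1 hy
  have hmem : gy * gx⁻¹ ∈ Cl π := mul_mem hgy (inv_mem hgx)
  have hxy : (gy * gx⁻¹) x = y := by
    rw [Perm.mul_apply, ← hgxe, Perm.inv_def, Equiv.symm_apply_apply, hgye]
  rw [ho] at hx
  obtain ⟨g', hg', hg'e⟩ := restr_agree hinv _ hmem x hx
  exact ⟨g', hg', Subtype.ext (by rw [hg'e, hxy])⟩

lemma orb_comb {S : Finset α} (hx₀ : x₀ ∈ S) (σ : Fin ℓ → Perm {x // x ∈ S})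
    (τ : Fin ℓ → Perm {x // ¬ x ∈ S}) (htσ : Trans' σ) : Orb (comb σ τ) x₀ = S := by
  apply Finset.ext
  intro y
  rw [mem_Orb]
  constructor
  · rintro ⟨g, hg, rfl⟩
    exact (Cl_comb_inv σ τ g hg x₀).1 hx₀
  · intro hy
    obtain ⟨g', hg', hg'e⟩ := htσ ⟨x₀, hx₀⟩ ⟨y, hy⟩
    obtain ⟨g, hg, hag⟩ := comb_agree σ τ g' hg'
    exact ⟨g, hg, by rw [hag x₀ hx₀, hg'e]⟩

/-- the central decomposition equivalence, for a fixed orbit S of x₀ -/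
noncomputable def decompAux (S : Finset α) (hx₀ : x₀ ∈ S) :
    {π : Fin ℓ → Perm α // Comm π ∧ Orb π x₀ = S} ≃
      {σ : Fin ℓ → Perm {x // x ∈ S} // Comm σ ∧ Trans' σ} ×
        {τ : Fin ℓ → Perm {x // ¬ x ∈ S} // Comm τ} where
  toFun p :=
    ⟨⟨restr p.1 S (hinv_of x₀ p.2.2), comm_restr _ p.2.1, trans_restr x₀ _ p.2.2⟩,
      ⟨restrC p.1 S (hinv_of x₀ p.2.2), comm_restrC _ p.2.1⟩⟩
  invFun q :=
    ⟨comb q.1.1 q.2.1, comm_comb q.1.2.1 q.2.2, orb_comb x₀ hx₀ q.1.1 q.2.1 q.1.2.2⟩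
  left_inv p := by
    apply Subtype.ext
    funext i
    ext x
    by_cases hx : x ∈ S
    · rw [comb_apply_mem _ _ i hx]
      rfl
    · rw [comb_apply_not_mem _ _ i hx]
      rfl
  right_inv q := by
    refine Prod.ext (Subtype.ext ?_) (Subtype.ext ?_)
    · funext i
      ext x
      simp only [restr, Perm.subtypePerm_apply]
      rw [comb_apply_coe]
    · funext i
      ext x
      simp only [restrC, Perm.subtypePerm_apply]
      rw [comb_apply_coe']

end Decomp

section Counting

noncomputable def CC (ℓ n : ℕ) : ℕ := Nat.card {π : Fin ℓ → Perm (Fin n) // Comm π}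
noncomputable def TC (ℓ n : ℕ) : ℕ := Nat.card {π : Fin ℓ → Perm (Fin n) // Comm π ∧ Trans' π}

/-- the monoid hom `Perm α →* Perm β` induced by an equiv -/
def permCongrHom (e : α ≃ β) : Perm α →* Perm β where
  toFun := e.permCongr
  map_one' := by ext x; simp
  map_mul' f g := by ext x; simp [Perm.mul_apply]

lemma comm_permCongr (e : α ≃ β) {π : Fin ℓ → Perm α} (hc : Comm π) :
    Comm (fun i => permCongrHom e (π i)) := by
  intro i j
  have := congrArg (permCongrHom e) (hc i j)
  exact (hc i j).map (permCongrHom e)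

lemma Cl_permCongr (e : α ≃ β) (π : Fin ℓ → Perm α) :
    Cl (fun i => permCongrHom e (π i)) = (Cl π).map (permCongrHom e) := by
  rw [Cl, Cl, MonoidHom.map_closure, ← Set.range_comp]
  rfl

lemma trans_permCongr (e : α ≃ β) {π : Fin ℓ → Perm α} (ht : Trans' π) :
    Trans' (fun i => permCongrHom e (π i)) := by
  intro x y
  obtain ⟨g, hg, hge⟩ := ht (e.symm x) (e.symm y)
  refine ⟨permCongrHom e g, ?_, ?_⟩
  · rw [Cl_permCongr]
    exact Subgroup.mem_map_of_mem _ hg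
  · show e.permCongr g x = y
    rw [Equiv.permCongr_apply, hge, Equiv.apply_symm_apply]

/-- transporting commuting tuples along an equiv -/
def tupleCongr (e : α ≃ β) : {π : Fin ℓ → Perm α // Comm π} ≃ {π : Fin ℓ → Perm β // Comm π} where
  toFun p := ⟨fun i => permCongrHom e (p.1 i), comm_permCongr e p.2⟩
  invFun p := ⟨fun i => permCongrHom e.symm (p.1 i), comm_permCongr e.symm p.2⟩
  left_inv p := by
    apply Subtype.ext
    funext i
    show e.symm.permCongr (e.permCongr _) = _
    ext x
    simp
  right_inv p := by
    apply Subtype.ext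
    funext i
    show e.permCongr (e.symm.permCongr _) = _
    ext x
    simp

/-- transporting commuting transitive tuples along an equiv -/
def tupleCongrT (e : α ≃ β) :
    {π : Fin ℓ → Perm α // Comm π ∧ Trans' π} ≃ {π : Fin ℓ → Perm β // Comm π ∧ Trans' π} where
  toFun p := ⟨fun i => permCongrHom e (p.1 i), comm_permCongr e p.2.1, trans_permCongr e p.2.2⟩
  invFun p := ⟨fun i => permCongrHom e.symm (p.1 i), comm_permCongr e.symm p.2.1,
    trans_permCongr e.symm p.2.2⟩
  left_inv p := by
    apply Subtype.ext
    funext i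
    show e.symm.permCongr (e.permCongr _) = _
    ext x
    simp
  right_inv p := by
    apply Subtype.ext
    funext i
    show e.permCongr (e.symm.permCongr _) = _
    ext x
    simp

lemma card_comm_eq (e : α ≃ β) [Fintype β] :
    Nat.card {π : Fin ℓ → Perm α // Comm π} = CC ℓ (Fintype.card β) := by
  rw [CC]
  exact Nat.card_congr (tupleCongr (e.trans (Fintype.equivFinOfCardEq rfl)))

lemma card_commT_eq (e : α ≃ β) [Fintype β] :
    Nat.card {π : Fin ℓ → Perm α // Comm π ∧ Trans' π} = TC ℓ (Fintype.card β) := by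
  rw [TC]
  exact Nat.card_congr (tupleCongrT (e.trans (Fintype.equivFinOfCardEq rfl)))

lemma natCard_sigma {I : Type*} [Fintype I] (f : I → Type*) [∀ i, Finite (f i)] :
    Nat.card ((i : I) × f i) = ∑ i : I, Nat.card (f i) := by
  letI : ∀ i, Fintype (f i) := fun i => Fintype.ofFinite _
  simp [Nat.card_eq_fintype_card, Fintype.card_sigma]

lemma CC_rec (ℓ m : ℕ) :
    CC ℓ (m + 1) = ∑ S : {S : Finset (Fin (m + 1)) // 0 ∈ S},
      TC ℓ S.1.card * CC ℓ (m + 1 - S.1.card) := by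
  classical
  rw [CC, Nat.card_congr (sigmaFiberSubtype (fun π : Fin ℓ → Perm (Fin (m + 1)) => Comm π)
    (fun π => Orb π 0) (fun S => 0 ∈ S) (fun π _ => x0_mem_Orb π 0)), natCard_sigma]
  refine Finset.sum_congr rfl ?_
  intro S _
  rw [Nat.card_congr (decompAux 0 S.1 S.2), Nat.card_prod]
  congr 1
  · rw [card_commT_eq (Equiv.refl _), Fintype.card_coe]
  · rw [card_comm_eq (Equiv.refl _), Fintype.card_subtype_compl, Fintype.card_fin,
      Fintype.card_coe]

lemma card_Cl {n : ℕ} (hn : n ≠ 0) {π : Fin ℓ → Perm (Fin n)} (hc : Comm π) (ht : Trans' π) :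
    Nat.card (Cl π) = n := by
  haveI : NeZero n := ⟨hn⟩
  set x₀ : Fin n := ⟨0, Nat.pos_of_ne_zero hn⟩ with hx₀
  have hbij : Function.Bijective (fun g : Cl π => (g : Perm (Fin n)) x₀) := by
    constructor
    · rintro ⟨g, hg⟩ ⟨g', hg'⟩ he
      simp only at he
      apply Subtype.ext
      show g = g'
      apply Equiv.ext
      intro y
      obtain ⟨h, hh, hhe⟩ := ht x₀ y
      have hgh : g (h x₀) = h (g x₀) := by
        have := Perm.ext_iff.1 (comm_Cl hc g hg h hh) x₀
        simpa [Perm.mul_apply] using this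
      have hgh' : g' (h x₀) = h (g' x₀) := by
        have := Perm.ext_iff.1 (comm_Cl hc g' hg' h hh) x₀
        simpa [Perm.mul_apply] using this
      calc g y = g (h x₀) := by rw [hhe]
        _ = h (g x₀) := hgh
        _ = h (g' x₀) := by rw [he]
        _ = g' (h x₀) := hgh'.symm
        _ = g' y := by rw [hhe]
    · intro y
      obtain ⟨h, hh, hhe⟩ := ht x₀ y
      exact ⟨⟨h, hh⟩, hhe⟩
  calc Nat.card (Cl π) = Nat.card (Fin n) := Nat.card_congr (Equiv.ofBijective _ hbij)
    _ = n := by simp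

lemma TC_le (ℓ n : ℕ) (hn : n ≠ 0) :
    TC ℓ n ≤ Nat.card {H : Subgroup (Perm (Fin n)) // Nat.card H = n} * n ^ ℓ := by
  classical
  letI : Fintype {H : Subgroup (Perm (Fin n)) // Nat.card H = n} := Fintype.ofFinite _
  set f : {π : Fin ℓ → Perm (Fin n) // Comm π ∧ Trans' π} →
      ((H : {H : Subgroup (Perm (Fin n)) // Nat.card H = n}) × (Fin ℓ → H.1)) :=
    fun p => ⟨⟨Cl p.1, card_Cl hn p.2.1 p.2.2⟩, fun i => ⟨p.1 i, mem_Cl _ i⟩⟩ with hf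
  have hinj : Function.Injective f := by
    intro p q h
    apply Subtype.ext
    funext i
    have := congrArg (fun z : ((H : {H : Subgroup (Perm (Fin n)) // Nat.card H = n}) ×
      (Fin ℓ → H.1)) => ((z.2 i : Perm (Fin n)))) h
    simpa [hf] using this
  calc TC ℓ n ≤ Nat.card ((H : {H : Subgroup (Perm (Fin n)) // Nat.card H = n}) ×
      (Fin ℓ → H.1)) := Nat.card_le_card_of_injective f hinj
    _ = ∑ H : {H : Subgroup (Perm (Fin n)) // Nat.card H = n}, Nat.card (Fin ℓ → H.1) :=
      natCard_sigma _
    _ = ∑ H : {H : Subgroup (Perm (Fin n)) // Nat.card H = n}, n ^ ℓ := by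
      refine Finset.sum_congr rfl ?_
      intro H _
      rw [Nat.card_fun, H.2, Nat.card_eq_fintype_card, Fintype.card_fin]
    _ = Nat.card {H : Subgroup (Perm (Fin n)) // Nat.card H = n} * n ^ ℓ := by
      rw [Finset.sum_const, Finset.card_univ, Nat.card_eq_fintype_card, smul_eq_mul]

lemma TC3_upper (ℓ : ℕ) : TC ℓ 3 ≤ 3 ^ ℓ := by
  classical
  have key : ∀ (p : {π : Fin ℓ → Perm (Fin 3) // Comm π ∧ Trans' π}) i, (p.1 i) ^ 3 = 1 := by
    intro p i
    have h3 : Nat.card (Cl p.1) = 3 := card_Cl (by norm_num) p.2.1 p.2.2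
    have h1 : (⟨p.1 i, mem_Cl _ i⟩ : Cl p.1) ^ Nat.card (Cl p.1) = 1 := pow_card_eq_one'
    rw [h3] at h1
    have := congrArg (Subtype.val) h1
    simpa using this
  have hinj : Function.Injective (fun p : {π : Fin ℓ → Perm (Fin 3) // Comm π ∧ Trans' π} =>
      (fun i => (⟨p.1 i, key p i⟩ : {σ : Perm (Fin 3) // σ ^ 3 = 1}))) := by
    intro p q h
    apply Subtype.ext
    funext i
    exact congrArg Subtype.val (congrFun h i)
  calc TC ℓ 3 ≤ Nat.card (Fin ℓ → {σ : Perm (Fin 3) // σ ^ 3 = 1}) :=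
      Nat.card_le_card_of_injective _ hinj
    _ = 3 ^ ℓ := by
      rw [Nat.card_fun, Nat.card_eq_fintype_card (α := Fin ℓ), Fintype.card_fin,
        Nat.card_eq_fintype_card]
      norm_num [show Fintype.card {σ : Perm (Fin 3) // σ ^ 3 = 1} = 3 from by decide]

lemma TC3_lower (ℓ : ℕ) : 3 ^ ℓ - 1 ≤ TC ℓ 3 := by
  classical
  set c1 : {σ : Perm (Fin 3) // σ ^ 3 = 1} := ⟨1, by decide⟩ with hc1
  have dcomm : ∀ x y : Perm (Fin 3), x ^ 3 = 1 → y ^ 3 = 1 → x * y = y * x := by decide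
  have dtrans : ∀ σ : Perm (Fin 3), σ ^ 3 = 1 → σ ≠ 1 → ∀ x y : Fin 3,
      ∃ m : Fin 4, (σ ^ (m : ℕ)) x = y := by decide
  set F : {f : Fin ℓ → {σ : Perm (Fin 3) // σ ^ 3 = 1} // f ≠ fun _ => c1} →
      {π : Fin ℓ → Perm (Fin 3) // Comm π ∧ Trans' π} := fun p =>
    ⟨fun i => (p.1 i).1, by
      intro i j
      exact dcomm _ _ (p.1 i).2 (p.1 j).2, by
      intro x y
      have : ∃ i, p.1 i ≠ c1 := by
        by_contra hcon
        push_neg at hcon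
        exact p.2 (funext hcon)
      obtain ⟨i, hi⟩ := this
      have hne : (p.1 i).1 ≠ 1 := by
        intro h1
        exact hi (Subtype.ext (by rw [h1, hc1]))
      obtain ⟨m, hm⟩ := dtrans _ (p.1 i).2 hne x y
      exact ⟨((p.1 i).1) ^ (m : ℕ), pow_mem (mem_Cl _ i) _, hm⟩⟩ with hF
  have hinj : Function.Injective F := by
    intro p q h
    apply Subtype.ext
    funext i
    apply Subtype.ext
    exact congrFun (congrArg Subtype.val h) i
  have hcard : Nat.card {f : Fin ℓ → {σ : Perm (Fin 3) // σ ^ 3 = 1} // f ≠ fun _ => c1} =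
      3 ^ ℓ - 1 := by
    rw [Nat.card_eq_fintype_card]
    have h1 : Fintype.card {f : Fin ℓ → {σ : Perm (Fin 3) // σ ^ 3 = 1} //
        f = fun _ => c1} = 1 := Fintype.card_subtype_eq _
    have h2 : Fintype.card (Fin ℓ → {σ : Perm (Fin 3) // σ ^ 3 = 1}) = 3 ^ ℓ := by
      rw [Fintype.card_fun, Fintype.card_fin,
        show Fintype.card {σ : Perm (Fin 3) // σ ^ 3 = 1} = 3 from by decide]
    rw [Fintype.card_subtype_compl, h1, h2]
  rw [← hcard]
  exact Nat.card_le_card_of_injective F hinj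

lemma CC_zero (ℓ : ℕ) : CC ℓ 0 = 1 := by
  rw [CC]
  haveI : Unique (Perm (Fin 0)) := ⟨⟨1⟩, fun σ => Equiv.ext (fun x => x.elim0)⟩
  haveI : Subsingleton {π : Fin ℓ → Perm (Fin 0) // Comm π} := by
    constructor
    rintro ⟨π, _⟩ ⟨π', _⟩
    apply Subtype.ext
    funext i
    exact Subsingleton.elim _ _
  haveI : Nonempty {π : Fin ℓ → Perm (Fin 0) // Comm π} :=
    ⟨⟨fun _ => 1, fun i j => Commute.one_left _⟩⟩
  exact Nat.card_unique

lemma CC_pos (ℓ n : ℕ) : 0 < CC ℓ n := by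
  rw [CC]
  haveI : Nonempty {π : Fin ℓ → Perm (Fin n) // Comm π} :=
    ⟨⟨fun _ => 1, fun i j => Commute.one_left _⟩⟩
  exact Nat.card_pos

lemma card_filter_three (m : ℕ) :
    ((Finset.univ : Finset {S : Finset (Fin (m + 1)) // 0 ∈ S}).filter
      (fun S => S.1.card = 3)).card = m.choose 2 := by
  classical
  have key : ((Finset.univ : Finset {S : Finset (Fin (m + 1)) // 0 ∈ S}).filter
      (fun S => S.1.card = 3)).card =
      (Finset.powersetCard 2 ((Finset.univ : Finset (Fin (m + 1))).erase 0)).card := by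
    refine Finset.card_bij (fun S _ => S.1.erase 0) ?_ ?_ ?_
    · intro S hS
      rw [Finset.mem_filter] at hS
      rw [Finset.mem_powersetCard]
      constructor
      · exact Finset.erase_subset_erase _ (Finset.subset_univ _)
      · rw [Finset.card_erase_of_mem S.2, hS.2]
    · intro S hS S' hS' h
      apply Subtype.ext
      rw [← Finset.insert_erase S.2, ← Finset.insert_erase S'.2, h]
    · intro t ht
      rw [Finset.mem_powersetCard] at ht
      have h0 : (0 : Fin (m + 1)) ∉ t := by
        intro h0
        exact absurd rfl (Finset.ne_of_mem_erase (ht.1 h0))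
      refine ⟨⟨insert 0 t, Finset.mem_insert_self _ _⟩, ?_, ?_⟩
      · rw [Finset.mem_filter]
        refine ⟨Finset.mem_univ _, ?_⟩
        rw [Finset.card_insert_of_notMem h0, ht.2]
      · exact Finset.erase_insert h0
  rw [key, Finset.card_powersetCard, Finset.card_erase_of_mem (Finset.mem_univ _),
    Finset.card_univ, Fintype.card_fin]
  norm_num

end Counting

section Analysis

open Real

/-- normalization factor `3 ^ (n (ℓ-1) / 3)` -/
noncomputable def rr (n ℓ : ℕ) : ℝ := (3 : ℝ) ^ (((n : ℝ) * ((ℓ : ℝ) - 1)) / 3)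

lemma rr_pos (n ℓ : ℕ) : 0 < rr n ℓ := Real.rpow_pos_of_pos (by norm_num) _

lemma rr_add (k j ℓ : ℕ) : rr k ℓ * rr j ℓ = rr (k + j) ℓ := by
  rw [rr, rr, rr, ← Real.rpow_add (by norm_num)]
  congr 1
  push_cast
  ring

lemma rr_zero (ℓ : ℕ) : rr 0 ℓ = 1 := by simp [rr]

lemma cube_lt {k : ℕ} (hk : k ≠ 3) : k ^ 3 < 3 ^ k := by
  have aux : ∀ p : ℕ, (p + 4) ^ 3 < 3 ^ (p + 4) := by
    intro p
    induction p with
    | zero => norm_num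
    | succ p ih =>
      show (p + 5) ^ 3 < 3 ^ (p + 5)
      have e1 : (p + 5) ^ 3 ≤ 2 * (p + 4) ^ 3 := by
        have x1 : (p + 5) ^ 3 = p^3 + 15*p^2 + 75*p + 125 := by ring
        have x2 : 2 * (p + 4) ^ 3 = 2*p^3 + 24*p^2 + 96*p + 128 := by ring
        omega
      have e2 : 2 * (p + 4) ^ 3 < 2 * 3 ^ (p + 4) := by omega
      have hA : 0 < 3 ^ (p + 4) := pow_pos (by norm_num) _
      have e3 : 2 * 3 ^ (p + 4) < 3 ^ (p + 5) := by
        have : (3:ℕ) ^ (p + 5) = 3 ^ (p + 4) * 3 := pow_succ 3 (p+4)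
        omega
      omega
  rcases Nat.lt_or_ge k 4 with h | h
  · interval_cases k <;> simp_all
  · obtain ⟨p, rfl⟩ : ∃ p, k = p + 4 := ⟨k - 4, by omega⟩
    exact aux p

lemma tendsto_TC3 : Filter.Tendsto (fun ℓ : ℕ => (TC ℓ 3 : ℝ) / rr 3 ℓ)
    Filter.atTop (nhds 3) := by
  have hr : ∀ ℓ : ℕ, rr 3 ℓ = (3:ℝ) ^ ℓ / 3 := by
    intro ℓ
    rw [rr, show ((3:ℕ):ℝ) * ((ℓ:ℝ) - 1) / 3 = (ℓ:ℝ) - 1 by push_cast; ring,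
      Real.rpow_sub (by norm_num), Real.rpow_natCast, Real.rpow_one]
  have hlow : Filter.Tendsto (fun ℓ : ℕ => 3 - 3 * ((1:ℝ)/3) ^ ℓ) Filter.atTop (nhds 3) := by
    have h0 : Filter.Tendsto (fun ℓ : ℕ => ((1:ℝ)/3) ^ ℓ) Filter.atTop (nhds 0) :=
      tendsto_pow_atTop_nhds_zero_of_lt_one (by norm_num) (by norm_num)
    have := (h0.const_mul (3:ℝ)).const_sub 3
    simpa using this
  refine tendsto_of_tendsto_of_tendsto_of_le_of_le hlow tendsto_const_nhds ?_ ?_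
  · intro ℓ
    have hTC : ((3:ℝ) ^ ℓ - 1) ≤ (TC ℓ 3 : ℝ) := by
      have h0 : (1:ℕ) ≤ 3 ^ ℓ := Nat.one_le_pow _ _ (by norm_num)
      have h1 : ((3 ^ ℓ - 1 : ℕ) : ℝ) ≤ (TC ℓ 3 : ℝ) := by exact_mod_cast TC3_lower ℓ
      rw [Nat.cast_sub h0] at h1
      push_cast at h1
      linarith
    have heq : 3 - 3 * ((1:ℝ)/3) ^ ℓ = ((3:ℝ) ^ ℓ - 1) / rr 3 ℓ := by
      have hpow : ((1:ℝ)/3) ^ ℓ = 1 / 3 ^ ℓ := by rw [div_pow, one_pow]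
      have h3 : (3:ℝ) ^ ℓ ≠ 0 := by positivity
      rw [hr, hpow]
      field_simp
    show 3 - 3 * ((1:ℝ)/3) ^ ℓ ≤ (TC ℓ 3 : ℝ) / rr 3 ℓ
    rw [heq]
    gcongr
    exact le_of_lt (rr_pos 3 ℓ)
  · intro ℓ
    show (TC ℓ 3 : ℝ) / rr 3 ℓ ≤ 3
    rw [div_le_iff₀ (rr_pos 3 ℓ), hr]
    have : (3:ℝ) * (3 ^ ℓ / 3) = 3 ^ ℓ := by ring
    rw [this]
    exact_mod_cast TC3_upper ℓ

lemma tendsto_TC_ne3 (k : ℕ) (hk0 : k ≠ 0) (hk3 : k ≠ 3) :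
    Filter.Tendsto (fun ℓ : ℕ => (TC ℓ k : ℝ) / rr k ℓ) Filter.atTop (nhds 0) := by
  classical
  set A : ℝ := (Nat.card {H : Subgroup (Perm (Fin k)) // Nat.card H = k} : ℝ) with hA
  set c : ℝ := (3 : ℝ) ^ ((k : ℝ) / 3) with hc
  have hc0 : 0 < c := Real.rpow_pos_of_pos (by norm_num) _
  have hc3 : c ^ 3 = 3 ^ k := by
    rw [hc, ← Real.rpow_natCast ((3:ℝ) ^ ((k:ℝ)/3)) 3, ← Real.rpow_mul (by norm_num)]
    rw [show (k : ℝ) / 3 * (3:ℕ) = (k : ℝ) by push_cast; ring, Real.rpow_natCast]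
  have hkc : (k : ℝ) < c := by
    by_contra hcon
    push_neg at hcon
    have h1 : c ^ 3 ≤ (k : ℝ) ^ 3 := pow_le_pow_left₀ (le_of_lt hc0) hcon 3
    have h2 : ((k:ℕ) : ℝ) ^ 3 < (3 : ℝ) ^ k := by exact_mod_cast cube_lt hk3
    rw [hc3] at h1
    linarith
  have hrr : ∀ ℓ : ℕ, rr k ℓ = c ^ ℓ / c := by
    intro ℓ
    rw [rr, show ((k:ℝ) * ((ℓ:ℝ) - 1)) / 3 = ((k:ℝ)/3) * (ℓ:ℝ) - (k:ℝ)/3 by ring,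
      Real.rpow_sub (by norm_num), Real.rpow_mul (by norm_num : (0:ℝ) ≤ 3),
      Real.rpow_natCast]
  have hupper : ∀ ℓ : ℕ, (TC ℓ k : ℝ) / rr k ℓ ≤ A * c * ((k : ℝ) / c) ^ ℓ := by
    intro ℓ
    have hTC : (TC ℓ k : ℝ) ≤ A * (k : ℝ) ^ ℓ := by
      have := TC_le ℓ k hk0
      have h1 : (TC ℓ k : ℝ) ≤ ((Nat.card {H : Subgroup (Perm (Fin k)) // Nat.card H = k}
          * k ^ ℓ : ℕ) : ℝ) := by exact_mod_cast this
      push_cast at h1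
      exact h1
    rw [hrr, div_le_iff₀ (by positivity)]
    calc (TC ℓ k : ℝ) ≤ A * (k : ℝ) ^ ℓ := hTC
      _ = A * c * ((k : ℝ) / c) ^ ℓ * (c ^ ℓ / c) := by
        field_simp
        ring_nf
        rw [mul_assoc (A * _), ← mul_pow, mul_inv_cancel₀ hc0.ne', one_pow, mul_one]
  have hlim : Filter.Tendsto (fun ℓ : ℕ => A * c * ((k : ℝ) / c) ^ ℓ) Filter.atTop (nhds 0) := by
    have h0 : Filter.Tendsto (fun ℓ : ℕ => ((k : ℝ) / c) ^ ℓ) Filter.atTop (nhds 0) :=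
      tendsto_pow_atTop_nhds_zero_of_lt_one (by positivity) ((div_lt_one hc0).2 hkc)
    have := h0.const_mul (A * c)
    simpa using this
  refine tendsto_of_tendsto_of_tendsto_of_le_of_le tendsto_const_nhds hlim ?_ hupper
  intro ℓ
  exact div_nonneg (Nat.cast_nonneg _) (le_of_lt (rr_pos k ℓ))

/-- the limit constants -/
noncomputable def LL (n : ℕ) : ℝ :=
  if n % 3 = 0 then (((2:ℝ) ^ (n / 3)) * ((n / 3).factorial : ℝ))⁻¹ else 0

lemma LL_zero : LL 0 = 1 := by simp [LL]

lemma keyArith (m : ℕ) :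
    (m.choose 2 : ℝ) * (3 * LL (m - 2) * ((m - 2).factorial : ℝ) / ((m + 1).factorial : ℝ))
      = LL (m + 1) := by
  rcases Nat.lt_or_ge m 2 with hm | hm
  · interval_cases m <;> simp [LL]
  · obtain ⟨q, rfl⟩ : ∃ q, m = q + 2 := ⟨m - 2, by omega⟩
    have hq2 : q + 2 - 2 = q := by omega
    rw [hq2]
    have hfac : ((q + 2).choose 2 : ℝ) * 2 * (q.factorial : ℝ) = ((q + 2).factorial : ℝ) := by
      exact_mod_cast congrArg (Nat.cast (R := ℝ))
        (Nat.choose_mul_factorial_mul_factorial (show 2 ≤ q + 2 by omega))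
    have hfacsucc : ((q + 2 + 1).factorial : ℝ) = (q + 3 : ℝ) * ((q + 2).factorial : ℝ) := by
      rw [show q + 2 + 1 = (q + 2) + 1 from rfl, Nat.factorial_succ]
      push_cast
      ring
    rcases Nat.decEq (q % 3) 0 with hq3 | hq3
    case isTrue =>
      have hd : q = 3 * (q / 3) := (Nat.mul_div_cancel' (Nat.dvd_of_mod_eq_zero hq3)).symm
      set d := q / 3 with hdd
      have hmod : (q + 2 + 1) % 3 = 0 := by omega
      have hdiv : (q + 2 + 1) / 3 = d + 1 := by omega
      rw [LL, LL, if_pos hq3, if_pos hmod, hdiv, ← hdd]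
      have hfd : ((d + 1).factorial : ℝ) = (d + 1 : ℝ) * (d.factorial : ℝ) := by
        rw [Nat.factorial_succ]; push_cast; ring
      have hq3r : (q : ℝ) = 3 * (d : ℝ) := by exact_mod_cast hd
      have hne1 : ((2:ℝ) ^ d) ≠ 0 := by positivity
      have hne2 : (d.factorial : ℝ) ≠ 0 := by positivity
      have hne3 : ((q + 2).factorial : ℝ) ≠ 0 := by positivity
      have hne4 : (q.factorial : ℝ) ≠ 0 := by positivity
      rw [hfacsucc, hfd, pow_succ]
      have hchoose : ((q + 2).choose 2 : ℝ) = ((q + 2).factorial : ℝ) / (2 * (q.factorial : ℝ)) := by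
        field_simp at hfac ⊢
        linarith [hfac]
      rw [hchoose]
      field_simp
      rw [hq3r]
      ring
    case isFalse =>
      have hmod : (q + 2 + 1) % 3 ≠ 0 := by omega
      rw [LL, LL, if_neg hq3, if_neg hmod]
      simp

lemma main_tendsto (n : ℕ) :
    Filter.Tendsto (fun ℓ : ℕ => (CC ℓ n : ℝ) / ((n.factorial : ℝ) * rr n ℓ))
      Filter.atTop (nhds (LL n)) := by
  induction n using Nat.strong_induction_on with
  | _ n ih =>
  rcases n with _ | m
  · have heq : ∀ ℓ : ℕ, (CC ℓ 0 : ℝ) / ((Nat.factorial 0 : ℝ) * rr 0 ℓ) = 1 := by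
      intro ℓ
      rw [CC_zero, rr_zero]
      norm_num
    rw [LL_zero]
    exact Filter.Tendsto.congr (fun ℓ => (heq ℓ).symm) tendsto_const_nhds
  · classical
    have hcardle : ∀ S : {S : Finset (Fin (m+1)) // 0 ∈ S}, S.1.card ≤ m + 1 := by
      intro S
      calc S.1.card ≤ (Finset.univ : Finset (Fin (m+1))).card := Finset.card_le_univ _
        _ = m + 1 := by rw [Finset.card_univ, Fintype.card_fin]
    have hcardpos : ∀ S : {S : Finset (Fin (m+1)) // 0 ∈ S}, S.1.card ≠ 0 := fun S =>
      Finset.card_ne_zero_of_mem S.2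
    set gterm : {S : Finset (Fin (m+1)) // 0 ∈ S} → ℕ → ℝ := fun S ℓ =>
      ((TC ℓ S.1.card : ℝ) / rr S.1.card ℓ) *
        ((CC ℓ (m + 1 - S.1.card) : ℝ) /
          (((m + 1 - S.1.card).factorial : ℝ) * rr (m + 1 - S.1.card) ℓ)) *
        (((m + 1 - S.1.card).factorial : ℝ) / (((m+1).factorial : ℕ) : ℝ)) with hgterm
    have hfun : ∀ ℓ : ℕ, (CC ℓ (m+1) : ℝ) / (((m+1).factorial : ℝ) * rr (m+1) ℓ)
        = ∑ S : {S : Finset (Fin (m+1)) // 0 ∈ S}, gterm S ℓ := by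
      intro ℓ
      rw [CC_rec ℓ m]
      push_cast
      rw [Finset.sum_div]
      refine Finset.sum_congr rfl ?_
      intro S _
      have hle := hcardle S
      have hr : rr S.1.card ℓ * rr (m + 1 - S.1.card) ℓ = rr (m+1) ℓ := by
        rw [rr_add]
        congr 1
        omega
      rw [hgterm, ← hr]
      have n1 : (((m+1).factorial : ℕ) : ℝ) ≠ 0 := by positivity
      have n2 : (((m+1-S.1.card).factorial : ℕ) : ℝ) ≠ 0 := by positivity
      have n3 := (rr_pos S.1.card ℓ).ne'
      have n4 := (rr_pos (m+1-S.1.card) ℓ).ne'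
      field_simp
    set climit : {S : Finset (Fin (m+1)) // 0 ∈ S} → ℝ := fun S =>
      (if S.1.card = 3 then (3:ℝ) else 0) * LL (m + 1 - S.1.card) *
        (((m + 1 - S.1.card).factorial : ℝ) / (((m+1).factorial : ℕ) : ℝ)) with hclimit
    have hterm : ∀ S : {S : Finset (Fin (m+1)) // 0 ∈ S},
        Filter.Tendsto (fun ℓ => gterm S ℓ) Filter.atTop (nhds (climit S)) := by
      intro S
      have h2 : Filter.Tendsto (fun ℓ => (CC ℓ (m + 1 - S.1.card) : ℝ) /
          (((m + 1 - S.1.card).factorial : ℝ) * rr (m + 1 - S.1.card) ℓ)) Filter.atTop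
          (nhds (LL (m + 1 - S.1.card))) := by
        apply ih
        have := hcardpos S
        omega
      have h1 : Filter.Tendsto (fun ℓ => (TC ℓ S.1.card : ℝ) / rr S.1.card ℓ) Filter.atTop
          (nhds (if S.1.card = 3 then (3:ℝ) else 0)) := by
        by_cases h : S.1.card = 3
        · simp only [h, if_pos]
          exact tendsto_TC3
        · simp only [if_neg h]
          exact tendsto_TC_ne3 _ (hcardpos S) h
      exact (h1.mul h2).mul tendsto_const_nhds
    have hsum := tendsto_finset_sum Finset.univ
      (fun (S : {S : Finset (Fin (m+1)) // 0 ∈ S}) (_ : S ∈ Finset.univ) => hterm S)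
    have hval : ∑ S : {S : Finset (Fin (m+1)) // 0 ∈ S}, climit S = LL (m+1) := by
      have hre : ∀ S : {S : Finset (Fin (m+1)) // 0 ∈ S}, climit S = if S.1.card = 3 then
          (3:ℝ) * LL (m - 2) * (((m-2).factorial : ℝ) / (((m+1).factorial : ℕ) : ℝ))
            else 0 := by
        intro S
        by_cases h : S.1.card = 3
        · rw [hclimit]
          simp only [h, if_pos]
          have e : m + 1 - 3 = m - 2 := by omega
          rw [e]
        · rw [hclimit]
          simp only [if_neg h]
          ring
      rw [Finset.sum_congr rfl (fun S _ => hre S), Finset.sum_ite, Finset.sum_const,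
        Finset.sum_const_zero, add_zero, card_filter_three, nsmul_eq_mul]
      have := keyArith m
      push_cast at this ⊢
      rw [mul_div_assoc] at this
      exact this
    rw [← hval]
    exact Filter.Tendsto.congr (fun ℓ => (hfun ℓ).symm) hsum

end Analysis

end NAsym

open Filter NAsym in
theorem ratio_tendsto_binom (a b : ℕ) (ha : 2 ≤ a) (hb : 2 ≤ b)
    (ha3 : a % 3 = 0) (hb3 : b % 3 = 0) :
    Tendsto (fun ℓ : ℕ => ((N ℓ a * N ℓ b / N ℓ (a + b) : ℚ) : ℝ)) atTop
        (nhds (Nat.choose ((a + b) / 3) (a / 3) : ℝ)) ∧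
      ((a, b) ≠ (3, 3) →
        ∃ L : ℕ, ∀ ℓ : ℕ, L ≤ ℓ → N ℓ a * N ℓ b - N ℓ (a + b) > 0) := by
  obtain ⟨A, hA⟩ : ∃ A, a = 3 * A := ⟨a / 3, by omega⟩
  obtain ⟨B, hB⟩ : ∃ B, b = 3 * B := ⟨b / 3, by omega⟩
  have hA1 : 1 ≤ A := by omega
  have hB1 : 1 ≤ B := by omega
  have hNval : ∀ ℓ n : ℕ, ((N ℓ n : ℚ) : ℝ) = (CC ℓ n : ℝ) / (n.factorial : ℝ) := by
    intro ℓ n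
    rw [N]
    push_cast
    rfl
  have hratio : ∀ ℓ, ((N ℓ a * N ℓ b / N ℓ (a + b) : ℚ) : ℝ) =
      ((CC ℓ a : ℝ) / ((a.factorial : ℝ) * rr a ℓ)) *
        ((CC ℓ b : ℝ) / ((b.factorial : ℝ) * rr b ℓ)) /
        ((CC ℓ (a + b) : ℝ) / (((a + b).factorial : ℝ) * rr (a + b) ℓ)) := by
    intro ℓ
    push_cast
    rw [hNval, hNval, hNval]
    have hrab : rr a ℓ * rr b ℓ = rr (a + b) ℓ := rr_add a b ℓ
    rcases eq_or_ne ((CC ℓ (a + b) : ℝ)) 0 with hz | hz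
    · rw [hz]
      simp
    · have n1 : ((a.factorial : ℕ) : ℝ) ≠ 0 := by positivity
      have n2 : ((b.factorial : ℕ) : ℝ) ≠ 0 := by positivity
      have n3 : (((a + b).factorial : ℕ) : ℝ) ≠ 0 := by positivity
      have n4 := (rr_pos a ℓ).ne'
      have n5 := (rr_pos b ℓ).ne'
      have n6 := (rr_pos (a + b) ℓ).ne'
      rw [← hrab]
      field_simp
  have hab3 : (a + b) % 3 = 0 := by omega
  have hLLab_ne : LL (a + b) ≠ 0 := by
    rw [LL, if_pos hab3]
    positivity
  have hlim0 := ((main_tendsto a).mul (main_tendsto b)).div (main_tendsto (a + b)) hLLab_ne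
  have hdiva : a / 3 = A := by omega
  have hdivb : b / 3 = B := by omega
  have hdivab : (a + b) / 3 = A + B := by omega
  have hch : ((A + B).choose A : ℝ) * (A.factorial : ℝ) * (B.factorial : ℝ)
      = ((A + B).factorial : ℝ) := by
    have h0 := Nat.choose_mul_factorial_mul_factorial (show A ≤ A + B by omega)
    rw [show A + B - A = B by omega] at h0
    exact_mod_cast congrArg (Nat.cast (R := ℝ)) h0
  have hLLval : LL a * LL b / LL (a + b) = (Nat.choose ((a + b) / 3) (a / 3) : ℝ) := by
    rw [LL, LL, LL, if_pos ha3, if_pos hb3, if_pos hab3, hdiva, hdivb, hdivab]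
    have n1 : (A.factorial : ℝ) ≠ 0 := by positivity
    have n2 : (B.factorial : ℝ) ≠ 0 := by positivity
    have n3 : ((A + B).factorial : ℝ) ≠ 0 := by positivity
    have n4 : ((2:ℝ) ^ A) ≠ 0 := by positivity
    have n5 : ((2:ℝ) ^ B) ≠ 0 := by positivity
    rw [pow_add]
    field_simp
    linear_combination (-1 : ℝ) * hch
  have hmain : Tendsto (fun ℓ : ℕ => ((N ℓ a * N ℓ b / N ℓ (a + b) : ℚ) : ℝ)) atTop
      (nhds (Nat.choose ((a + b) / 3) (a / 3) : ℝ)) := by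
    rw [← hLLval]
    exact Tendsto.congr (fun ℓ => (hratio ℓ).symm) hlim0
  refine ⟨hmain, ?_⟩
  intro _
  have hch2 : 2 ≤ ((a + b) / 3).choose (a / 3) := by
    rw [hdiva, hdivab]
    obtain ⟨A', rfl⟩ : ∃ A', A = A' + 1 := ⟨A - 1, by omega⟩
    have h1 : 0 < (A' + B).choose A' := Nat.choose_pos (by omega)
    have h2 : 0 < (A' + B).choose (A' + 1) := Nat.choose_pos (by omega)
    have he : A' + 1 + B = (A' + B) + 1 := by omega
    rw [he, Nat.choose_succ_succ]
    simp only [Nat.succ_eq_add_one]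
    omega
  have h1lt : (1 : ℝ) < (((a + b) / 3).choose (a / 3) : ℝ) := by
    have : (2 : ℝ) ≤ (((a + b) / 3).choose (a / 3) : ℝ) := by exact_mod_cast hch2
    linarith
  have hev : ∀ᶠ ℓ in atTop, (1 : ℝ) < ((N ℓ a * N ℓ b / N ℓ (a + b) : ℚ) : ℝ) :=
    hmain.eventually (eventually_gt_nhds h1lt)
  obtain ⟨L, hL⟩ := eventually_atTop.1 hev
  refine ⟨L, fun ℓ hℓ => ?_⟩
  have h1 : (1 : ℚ) < N ℓ a * N ℓ b / N ℓ (a + b) := by exact_mod_cast hL ℓ hℓ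
  have hpos : 0 < N ℓ (a + b) := by
    rw [N]
    apply div_pos
    · have h0 := CC_pos ℓ (a + b)
      exact_mod_cast h0
    · exact_mod_cast Nat.factorial_pos (a + b)
  have h2 := (one_lt_div hpos).1 h1
  linarith
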